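/- Let T be a metric space with exactly n points (n ≥ 2), let f : T → ℝⁿ be 1-Lipschitz, and let g₁, …, g_n be independent standard Gaussian random variables on a probability space Ω. For ω ∈ Ω define u_ω : T → ℝ by u_ω(t) = Σᵢ₌₁ⁿ f(t)ᵢ · gᵢ(ω), and let Lip(u_ω) denote its Lipschitz constant. Then there is a universal constant C > 0 such that E_Ω[Lip(u_ω)²] ≤ C · log n. -/

import Mathlib

open MeasureTheory ProbabilityTheory Real
open scoped NNReal ENNReal

lemma integrable_exp_lin_sub_sq {b : ℝ} (hb : 0 < b) (c : ℝ) :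
    Integrable (fun x : ℝ => Real.exp (c * x - b * x ^ 2)) := by
  have key : ∀ x : ℝ, c * x - b * x ^ 2 = -b * (x - c / (2 * b)) ^ 2 + c ^ 2 / (4 * b) := by
    intro x; field_simp; ring
  simp_rw [key, Real.exp_add]
  exact (((integrable_exp_neg_mul_sq hb).comp_sub_right (c / (2 * b))).mul_const _)

lemma integral_exp_lin_sub_sq {b : ℝ} (hb : 0 < b) (c : ℝ) :
    (∫ x : ℝ, Real.exp (c * x - b * x ^ 2)) =
      Real.sqrt (π / b) * Real.exp (c ^ 2 / (4 * b)) := by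
  have key : ∀ x : ℝ, c * x - b * x ^ 2 = -b * (x - c / (2 * b)) ^ 2 + c ^ 2 / (4 * b) := by
    intro x; field_simp; ring
  simp_rw [key, Real.exp_add]
  rw [integral_mul_const, integral_sub_right_eq_self (fun x => Real.exp (-b * x ^ 2)),
    integral_gaussian]

lemma gaussianReal_std_eq :
    gaussianReal 0 1 = volume.withDensity
      (fun x => ((Real.toNNReal (gaussianPDFReal 0 1 x) : ℝ≥0) : ℝ≥0∞)) := by
  rw [gaussianReal_of_var_ne_zero 0 one_ne_zero]
  rfl

lemma pdf_mul (u x : ℝ) : gaussianPDFReal 0 1 x * Real.exp (u * x)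
    = (Real.sqrt (2 * π))⁻¹ * Real.exp (u * x - (1/2) * x ^ 2) := by
  simp only [gaussianPDFReal, NNReal.coe_one, mul_one, sub_zero]
  rw [mul_assoc, ← Real.exp_add]
  have : -x ^ 2 / 2 + u * x = u * x - (1/2) * x ^ 2 := by ring
  rw [this]

lemma integral_exp_mul_gaussianReal (u : ℝ) :
    ∫ x, Real.exp (u * x) ∂(gaussianReal 0 1) = Real.exp (u ^ 2 / 2) := by
  rw [gaussianReal_std_eq,
    integral_withDensity_eq_integral_smul
      ((measurable_gaussianPDFReal 0 1).real_toNNReal) (fun x => Real.exp (u * x))]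
  have : ∀ x : ℝ, (Real.toNNReal (gaussianPDFReal 0 1 x)) • Real.exp (u * x)
      = (Real.sqrt (2 * π))⁻¹ * Real.exp (u * x - (1/2) * x ^ 2) := by
    intro x
    rw [NNReal.smul_def, smul_eq_mul, Real.coe_toNNReal _ (gaussianPDFReal_nonneg 0 1 x), pdf_mul]
  simp_rw [this]
  rw [integral_const_mul, integral_exp_lin_sub_sq (by norm_num : (0:ℝ) < 1/2) u]
  have h2 : π / (1/2 : ℝ) = 2 * π := by ring
  rw [h2]
  have hs : Real.sqrt (2 * π) ≠ 0 := by positivity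
  have h3 : u ^ 2 / (4 * (1/2 : ℝ)) = u ^ 2 / 2 := by norm_num
  rw [h3, inv_mul_cancel_left₀ hs]

lemma integrable_exp_mul_gaussianReal (u : ℝ) :
    Integrable (fun x => Real.exp (u * x)) (gaussianReal 0 1) := by
  rw [gaussianReal_std_eq,
    integrable_withDensity_iff ((measurable_gaussianPDFReal 0 1).real_toNNReal.coe_nnreal_ennreal)
      (ae_of_all _ fun x => ENNReal.coe_lt_top)]
  have : ∀ x : ℝ, Real.exp (u * x) * ((Real.toNNReal (gaussianPDFReal 0 1 x) : ℝ≥0) : ℝ)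
      = (Real.sqrt (2 * π))⁻¹ * Real.exp (u * x - (1/2) * x ^ 2) := by
    intro x
    rw [Real.coe_toNNReal _ (gaussianPDFReal_nonneg 0 1 x), mul_comm, pdf_mul]
  simp_rw [ENNReal.coe_toReal]
  simp_rw [this]
  exact (integrable_exp_lin_sub_sq (by norm_num) u).const_mul _

lemma exp_sq_quarter_bound {Ω : Type*} [MeasurableSpace Ω] (P : Measure Ω)
    [IsProbabilityMeasure P] {n : ℕ} (g : Fin n → Ω → ℝ) (hgm : ∀ i, Measurable (g i))
    (hgi : iIndepFun g P)
    (hgl : ∀ i, P.map (g i) = gaussianReal 0 1)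
    (w : Fin n → ℝ) (hw : ∑ i, w i ^ 2 ≤ 1) :
    Integrable (fun ω => Real.exp ((∑ i, w i * g i ω) ^ 2 / 4)) P ∧
      ∫ ω, Real.exp ((∑ i, w i * g i ω) ^ 2 / 4) ∂P ≤ 2 := by
  classical
  set X : Fin n → Ω → ℝ := fun i ω => w i * g i ω with hX
  have hXm : ∀ i, Measurable (X i) := fun i => (hgm i).const_mul (w i)
  have hXind : iIndepFun X P :=
    hgi.comp (fun i x => w i * x) (fun i => measurable_const_mul (w i))
  set Y : Ω → ℝ := fun ω => ∑ i, w i * g i ω with hY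
  have hYm : Measurable Y := by
    apply Finset.measurable_sum
    exact fun i _ => hXm i
  have hYsum : (∑ i, X i) = Y := by
    funext ω; simp [hX, hY, Finset.sum_apply]
  -- integrability and mgf of each X i
  have hXgi : ∀ (u : ℝ) (i : Fin n), Integrable (fun ω => Real.exp (u * g i ω)) P := by
    intro u i
    have h1 : Integrable (fun x => Real.exp (u * x)) (P.map (g i)) := by
      rw [hgl i]; exact _root_.integrable_exp_mul_gaussianReal u
    exact (integrable_map_measure
      (Real.continuous_exp.comp (continuous_const.mul continuous_id)).aestronglyMeasurable
      (hgm i).aemeasurable).mp h1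
  have hXgint : ∀ (u : ℝ) (i : Fin n),
      ∫ ω, Real.exp (u * g i ω) ∂P = Real.exp (u ^ 2 / 2) := by
    intro u i
    have := integral_map (μ := P) (hgm i).aemeasurable
      (f := fun x => Real.exp (u * x))
      (Real.continuous_exp.comp (continuous_const.mul continuous_id)).aestronglyMeasurable
    rw [hgl i, integral_exp_mul_gaussianReal u] at this
    exact this.symm
  have hXint : ∀ (s : ℝ) (i : Fin n), Integrable (fun ω => Real.exp (s * X i ω)) P := by
    intro s i
    have := hXgi (s * w i) i
    simpa [hX, mul_assoc] using this
  have hXmgf : ∀ (s : ℝ) (i : Fin n), mgf (X i) P s = Real.exp ((s * w i) ^ 2 / 2) := by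
    intro s i
    rw [mgf]
    rw [show (fun ω => Real.exp (s * X i ω)) = fun ω => Real.exp ((s * w i) * g i ω) by
      funext ω; rw [hX]; ring_nf]
    exact hXgint (s * w i) i
  -- mgf of Y
  have hYint : ∀ s : ℝ, Integrable (fun ω => Real.exp (s * Y ω)) P := by
    intro s
    have := hXind.integrable_exp_mul_sum (t := s) hXm (s := Finset.univ)
      (fun i _ => hXint s i)
    rwa [hYsum] at this
  have hYmgf : ∀ s : ℝ, mgf Y P s ≤ Real.exp (s ^ 2 / 2) := by
    intro s
    rw [← hYsum, hXind.mgf_sum hXm]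
    have : ∀ i ∈ Finset.univ, mgf (X i) P s = Real.exp ((s * w i) ^ 2 / 2) :=
      fun i _ => hXmgf s i
    rw [Finset.prod_congr rfl this, ← Real.exp_sum]
    apply Real.exp_le_exp.mpr
    have : ∑ i, (s * w i) ^ 2 / 2 = (s ^ 2 / 2) * ∑ i, w i ^ 2 := by
      rw [Finset.mul_sum]; congr 1; funext i; ring
    rw [this]
    calc (s ^ 2 / 2) * ∑ i, w i ^ 2 ≤ (s ^ 2 / 2) * 1 :=
      mul_le_mul_of_nonneg_left hw (by positivity)
    _ = s ^ 2 / 2 := mul_one _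
  -- the key lintegral bound
  have hπ : (0:ℝ) < Real.sqrt π := Real.sqrt_pos.mpr Real.pi_pos
  have hid : ∀ y : ℝ, Real.exp (y ^ 2 / 4)
      = (Real.sqrt π)⁻¹ * ∫ s : ℝ, Real.exp (y * s - s ^ 2) := by
    intro y
    rw [show (fun s : ℝ => Real.exp (y * s - s ^ 2))
        = fun s : ℝ => Real.exp (y * s - 1 * s ^ 2) by funext s; rw [one_mul]]
    rw [integral_exp_lin_sub_sq one_pos y]
    rw [show π / (1:ℝ) = π by ring, show (4:ℝ) * 1 = 4 by norm_num]
    rw [← mul_assoc, inv_mul_cancel₀ hπ.ne', one_mul]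
  have hkey : ∫⁻ ω, ENNReal.ofReal (Real.exp (Y ω ^ 2 / 4)) ∂P ≤ ENNReal.ofReal 2 := by
    have step1 : ∀ ω, ENNReal.ofReal (Real.exp (Y ω ^ 2 / 4))
        = ENNReal.ofReal ((Real.sqrt π)⁻¹) *
          ∫⁻ s : ℝ, ENNReal.ofReal (Real.exp (Y ω * s - s ^ 2)) := by
      intro ω
      rw [hid (Y ω), ENNReal.ofReal_mul (by positivity),
        ofReal_integral_eq_lintegral_ofReal
          (by simpa [one_mul] using integrable_exp_lin_sub_sq one_pos (Y ω))
          (ae_of_all _ fun s => (Real.exp_pos _).le)]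
    have hinner : ∀ s : ℝ, ∫⁻ ω, ENNReal.ofReal (Real.exp (Y ω * s - s ^ 2)) ∂P
        ≤ ENNReal.ofReal (Real.exp (- s ^ 2 / 2)) := by
      intro s
      have h1 : ∀ ω, Real.exp (Y ω * s - s ^ 2)
          = Real.exp (- s ^ 2) * Real.exp (s * Y ω) := by
        intro ω; rw [← Real.exp_add]; ring_nf
      calc ∫⁻ ω, ENNReal.ofReal (Real.exp (Y ω * s - s ^ 2)) ∂P
          = ENNReal.ofReal (Real.exp (- s ^ 2)) *
            ∫⁻ ω, ENNReal.ofReal (Real.exp (s * Y ω)) ∂P := by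
            simp_rw [h1, ENNReal.ofReal_mul (Real.exp_pos (- s ^ 2)).le]
            rw [lintegral_const_mul' _ _ ENNReal.ofReal_ne_top]
        _ = ENNReal.ofReal (Real.exp (- s ^ 2)) * ENNReal.ofReal (mgf Y P s) := by
            rw [← ofReal_integral_eq_lintegral_ofReal (hYint s)
              (ae_of_all _ fun ω => (Real.exp_pos _).le)]
            rfl
        _ ≤ ENNReal.ofReal (Real.exp (- s ^ 2)) * ENNReal.ofReal (Real.exp (s ^ 2 / 2)) :=
            mul_le_mul_right (ENNReal.ofReal_le_ofReal (hYmgf s)) _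
        _ = ENNReal.ofReal (Real.exp (- s ^ 2 / 2)) := by
            rw [← ENNReal.ofReal_mul (Real.exp_pos _).le, ← Real.exp_add]
            congr 1; ring
    have hout : ∫⁻ s : ℝ, ENNReal.ofReal (Real.exp (- s ^ 2 / 2)) ∂(volume)
        = ENNReal.ofReal (Real.sqrt (2 * π)) := by
      have h2 : ∀ s : ℝ, Real.exp (- s ^ 2 / 2) = Real.exp (-(1/2 : ℝ) * s ^ 2) := by
        intro s; congr 1; ring
      simp_rw [h2]
      rw [← ofReal_integral_eq_lintegral_ofReal (integrable_exp_neg_mul_sq (by norm_num))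
        (ae_of_all _ fun s => (Real.exp_pos _).le), integral_gaussian]
      congr 1
      rw [show π / (1/2 : ℝ) = 2 * π by ring]
    calc ∫⁻ ω, ENNReal.ofReal (Real.exp (Y ω ^ 2 / 4)) ∂P
        = ENNReal.ofReal ((Real.sqrt π)⁻¹) *
          ∫⁻ ω, ∫⁻ s : ℝ, ENNReal.ofReal (Real.exp (Y ω * s - s ^ 2)) ∂(volume) ∂P := by
          simp_rw [step1]; rw [lintegral_const_mul]
          exact (Measurable.lintegral_prod_right
            (((hYm.comp measurable_fst).mul measurable_snd |>.sub
              (measurable_snd.pow_const 2)).exp.ennreal_ofReal))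
      _ = ENNReal.ofReal ((Real.sqrt π)⁻¹) *
          ∫⁻ s : ℝ, ∫⁻ ω, ENNReal.ofReal (Real.exp (Y ω * s - s ^ 2)) ∂P ∂(volume) := by
          congr 1
          exact lintegral_lintegral_swap
            (((hYm.comp measurable_fst).mul measurable_snd |>.sub
              (measurable_snd.pow_const 2)).exp.ennreal_ofReal).aemeasurable
      _ ≤ ENNReal.ofReal ((Real.sqrt π)⁻¹) *
          ∫⁻ s : ℝ, ENNReal.ofReal (Real.exp (- s ^ 2 / 2)) ∂(volume) :=
          mul_le_mul_right (lintegral_mono hinner) _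
      _ = ENNReal.ofReal ((Real.sqrt π)⁻¹ * Real.sqrt (2 * π)) := by
          rw [hout, ← ENNReal.ofReal_mul (by positivity)]
      _ ≤ ENNReal.ofReal 2 := by
          apply ENNReal.ofReal_le_ofReal
          rw [Real.sqrt_mul (by norm_num : (0:ℝ) ≤ 2) π, ← mul_assoc,
            mul_comm ((Real.sqrt π)⁻¹), mul_assoc, inv_mul_cancel₀ hπ.ne', mul_one]
          calc Real.sqrt 2 ≤ Real.sqrt 4 := Real.sqrt_le_sqrt (by norm_num)
            _ = 2 := by
              rw [show (4:ℝ) = 2 ^ 2 by norm_num, Real.sqrt_sq (by norm_num : (0:ℝ) ≤ 2)]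
  have hmeas : Measurable fun ω => Real.exp (Y ω ^ 2 / 4) :=
    ((hYm.pow_const 2).div_const 4).exp
  have hint : Integrable (fun ω => Real.exp (Y ω ^ 2 / 4)) P := by
    refine ⟨hmeas.aestronglyMeasurable, ?_⟩
    rw [hasFiniteIntegral_iff_ofReal (ae_of_all _ fun ω => (Real.exp_pos _).le)]
    exact lt_of_le_of_lt hkey ENNReal.ofReal_lt_top
  refine ⟨hint, ?_⟩
  rw [integral_eq_lintegral_of_nonneg_ae (ae_of_all _ fun ω => (Real.exp_pos _).le)
    hmeas.aestronglyMeasurable]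
  calc (∫⁻ ω, ENNReal.ofReal (Real.exp (Y ω ^ 2 / 4)) ∂P).toReal
      ≤ (ENNReal.ofReal 2).toReal := ENNReal.toReal_mono ENNReal.ofReal_ne_top hkey
    _ = 2 := by rw [ENNReal.toReal_ofReal]; norm_num

lemma self_le_exp_quarter (x c : ℝ) :
    x ≤ c + 4 * Real.exp (-(c / 4)) * Real.exp (x / 4) := by
  have h1 : (x - c) / 4 ≤ Real.exp ((x - c) / 4) :=
    le_trans (by linarith) (Real.add_one_le_exp _)
  have h2 : Real.exp ((x - c) / 4) = Real.exp (-(c / 4)) * Real.exp (x / 4) := by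
    rw [← Real.exp_add]; congr 1; ring
  nlinarith [h1, h2]

lemma exp_three_half_ge : (4:ℝ) ≤ Real.exp (3/2) := by
  have he1 : (2.7:ℝ) < Real.exp 1 := by
    have := Real.exp_one_gt_d9; linarith
  have hsq : Real.exp (3/2) * Real.exp (3/2) = Real.exp 3 := by
    rw [← Real.exp_add]; norm_num
  have h3 : Real.exp 3 = Real.exp 1 * Real.exp 1 * Real.exp 1 := by
    rw [← Real.exp_add, ← Real.exp_add]; norm_num
  have h16 : (16:ℝ) ≤ Real.exp 3 := by rw [h3]; nlinarith [Real.exp_pos (1:ℝ)]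
  by_contra hlt
  push_neg at hlt
  have hpos := Real.exp_pos (3/2 : ℝ)
  nlinarith

lemma log_two_gt_two_thirds : (2/3 : ℝ) < Real.log 2 := by
  rw [Real.lt_log_iff_exp_lt (by norm_num : (0:ℝ) < 2)]
  have hcube : Real.exp (2/3) ^ 3 = Real.exp 2 := by
    rw [← Real.exp_nat_mul]; norm_num
  have h2 : Real.exp 2 = Real.exp 1 * Real.exp 1 := by
    rw [← Real.exp_add]; norm_num
  have he2 : Real.exp 1 < 2.72 := by
    have := Real.exp_one_lt_d9; linarith
  have h8 : Real.exp (2/3) ^ 3 < 2 ^ 3 := by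
    rw [hcube, h2]; nlinarith [Real.exp_pos (1:ℝ)]
  exact lt_of_pow_lt_pow_left₀ 3 (by norm_num) h8

set_option maxHeartbeats 1000000 in
/-- Let `T` be a metric space with `n ≥ 2` points, `f : T → ℝⁿ` 1-Lipschitz, and
`g₁, …, g_n` independent standard Gaussians on `Ω`. For `ω ∈ Ω` let
`u_ω t = ∑ i, f t i * g i ω`. Then `E[Lip(u_ω)²] ≤ C · log n` for a universal `C > 0`,
where `Lip(u_ω) = sup_{s ≠ t} |u_ω s − u_ω t| / d(s, t)`. -/
theorem expected_sq_lipschitz_gaussian_image :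
    ∃ C : ℝ, 0 < C ∧
      ∀ (n : ℕ), 2 ≤ n →
        ∀ (T : Type*) [MetricSpace T] [Fintype T], Fintype.card T = n →
          ∀ (Ω : Type*) [MeasurableSpace Ω] (P : Measure Ω) [IsProbabilityMeasure P]
            (f : T → EuclideanSpace ℝ (Fin n)) (g : Fin n → Ω → ℝ),
            LipschitzWith 1 f →
            (∀ i, Measurable (g i)) →
            iIndepFun g P →
            (∀ i, P.map (g i) = gaussianReal 0 1) →
            ∫ ω, (⨆ s : T, ⨆ t : T, ⨆ _ : s ≠ t,
                (|∑ i, (f s i - f t i) * g i ω| / dist s t) ^ 2) ∂P ≤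
              C * Real.log n := by
  refine ⟨20, by norm_num, ?_⟩
  intro n hn T _ _ hT Ω _ P _ f g hf hgm hgi hgl
  have hn1 : (1:ℝ) ≤ (n:ℝ) := by exact_mod_cast hn.trans' (by norm_num)
  have hn2 : (2:ℝ) ≤ (n:ℝ) := by exact_mod_cast hn
  have hnpos : (0:ℝ) < (n:ℝ) := by linarith
  -- directions
  set w : T × T → Fin n → ℝ := fun p i => (f p.1 i - f p.2 i) / dist p.1 p.2 with hw
  have hwsum : ∀ p : T × T, ∑ i, w p i ^ 2 ≤ 1 := by
    intro p
    rcases eq_or_ne p.1 p.2 with h | h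
    · simp [hw, h]
    · have hd : 0 < dist p.1 p.2 := dist_pos.mpr h
      have hdist : Real.sqrt (∑ i, (f p.1 i - f p.2 i) ^ 2) ≤ dist p.1 p.2 := by
        have h1 := hf.dist_le_mul p.1 p.2
        rw [EuclideanSpace.dist_eq] at h1
        simp_rw [Real.dist_eq, sq_abs] at h1
        simpa using h1
      have hsq : ∑ i, (f p.1 i - f p.2 i) ^ 2 ≤ dist p.1 p.2 ^ 2 := by
        nlinarith [Real.sq_sqrt (Finset.sum_nonneg
          (fun (i : Fin n) (_ : i ∈ Finset.univ) => sq_nonneg (f p.1 i - f p.2 i))), hdist,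
          Real.sqrt_nonneg (∑ i, (f p.1 i - f p.2 i) ^ 2)]
      have : ∑ i, w p i ^ 2 = (∑ i, (f p.1 i - f p.2 i) ^ 2) / dist p.1 p.2 ^ 2 := by
        rw [Finset.sum_div]
        exact Finset.sum_congr rfl fun i _ => by rw [hw, div_pow]
      rw [this, div_le_one (by positivity)]
      exact hsq
  set Y : T × T → Ω → ℝ := fun p ω => ∑ i, w p i * g i ω with hY
  have hkey := fun p : T × T => exp_sq_quarter_bound P g hgm hgi hgl (w p) (hwsum p)
  set S : Ω → ℝ := fun ω => ∑ p : T × T, Real.exp (Y p ω ^ 2 / 4) with hS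
  have hSnn : ∀ ω, 0 ≤ S ω := fun ω =>
    Finset.sum_nonneg fun p _ => (Real.exp_pos _).le
  have hSint : Integrable S P := integrable_finset_sum _ fun p _ => (hkey p).1
  have hSval : ∫ ω, S ω ∂P ≤ 2 * (n:ℝ) ^ 2 := by
    rw [hS, integral_finset_sum _ fun p _ => (hkey p).1]
    calc ∑ p : T × T, ∫ ω, Real.exp (Y p ω ^ 2 / 4) ∂P
        ≤ ∑ _p : T × T, (2:ℝ) := Finset.sum_le_sum fun p _ => (hkey p).2
      _ = 2 * (n:ℝ) ^ 2 := by
          rw [Finset.sum_const, Finset.card_univ, Fintype.card_prod, hT]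
          push_cast; ring
  set a : ℝ := 8 * Real.log n + 6 with ha
  have hlogn : (0:ℝ) ≤ Real.log n := Real.log_nonneg hn1
  have hann : 0 ≤ a := by positivity
  set c : ℝ := 4 * Real.exp (-(a / 4)) with hc
  have hcpos : 0 < c := by positivity
  -- pointwise bound
  have hpt : ∀ ω, (⨆ s : T, ⨆ t : T, ⨆ _ : s ≠ t,
      (|∑ i, (f s i - f t i) * g i ω| / dist s t) ^ 2) ≤ a + c * S ω := by
    intro ω
    have hrhs : 0 ≤ a + c * S ω := by positivity
    refine Real.iSup_le (fun s => Real.iSup_le (fun t => Real.iSup_le (fun hst => ?_) hrhs) hrhs) hrhs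
    have hd : 0 < dist s t := dist_pos.mpr hst
    have hYst : Y (s, t) ω = (∑ i, (f s i - f t i) * g i ω) / dist s t := by
      show (∑ i, w (s, t) i * g i ω) = (∑ i, (f s i - f t i) * g i ω) / dist s t
      rw [Finset.sum_div]
      refine Finset.sum_congr rfl fun i _ => ?_
      show (f s i - f t i) / dist s t * g i ω = (f s i - f t i) * g i ω / dist s t
      ring
    have heq : (|∑ i, (f s i - f t i) * g i ω| / dist s t) ^ 2 = Y (s, t) ω ^ 2 := by
      rw [hYst, div_pow, div_pow, sq_abs]
    rw [heq]
    calc Y (s, t) ω ^ 2 ≤ a + c * Real.exp (Y (s, t) ω ^ 2 / 4) := self_le_exp_quarter _ _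
      _ ≤ a + c * S ω := by
          have : Real.exp (Y (s, t) ω ^ 2 / 4) ≤ S ω :=
            Finset.single_le_sum (fun p _ => (Real.exp_pos (Y p ω ^ 2 / 4)).le)
              (Finset.mem_univ (s, t))
          nlinarith
  -- integrate
  have hhint : Integrable (fun ω => a + c * S ω) P :=
    (integrable_const a).add (hSint.const_mul c)
  have hMnn : ∀ ω, 0 ≤ ⨆ s : T, ⨆ t : T, ⨆ _ : s ≠ t,
      (|∑ i, (f s i - f t i) * g i ω| / dist s t) ^ 2 := fun ω =>
    Real.iSup_nonneg fun s => Real.iSup_nonneg fun t => Real.iSup_nonneg fun _ => sq_nonneg _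
  have hle1 : ∫ ω, (⨆ s : T, ⨆ t : T, ⨆ _ : s ≠ t,
      (|∑ i, (f s i - f t i) * g i ω| / dist s t) ^ 2) ∂P ≤ ∫ ω, (a + c * S ω) ∂P :=
    integral_mono_of_nonneg (ae_of_all _ hMnn) hhint (ae_of_all _ hpt)
  have hle2 : ∫ ω, (a + c * S ω) ∂P ≤ a + c * (2 * (n:ℝ) ^ 2) := by
    rw [integral_add (integrable_const a) (hSint.const_mul c), integral_const,
      integral_const_mul, probReal_univ]
    simp only [ENNReal.toReal_one, smul_eq_mul, one_mul]
    have := mul_le_mul_of_nonneg_left hSval hcpos.le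
    linarith
  -- numeric estimates
  have hexpa : Real.exp (-(a / 4)) = Real.exp (-(3/2 : ℝ)) / (n:ℝ) ^ 2 := by
    rw [ha]
    have : -((8 * Real.log n + 6) / 4) = -(3/2 : ℝ) + (-(2 * Real.log n)) := by ring
    rw [this, Real.exp_add]
    congr 1
    rw [show -(2 * Real.log (n:ℝ)) = -(Real.log n + Real.log n) by ring, Real.exp_neg,
      Real.exp_add, Real.exp_log hnpos]
    rw [sq]
  have hexp32 : (4:ℝ) ≤ Real.exp (3/2) := exp_three_half_ge
  have hsecond : c * (2 * (n:ℝ) ^ 2) ≤ 2 := by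
    rw [hc, hexpa]
    have hne : (n:ℝ) ^ 2 ≠ 0 := by positivity
    have h1 : 4 * (Real.exp (-(3/2:ℝ)) / (n:ℝ)^2) * (2 * (n:ℝ)^2)
        = 8 * Real.exp (-(3/2:ℝ)) := by
      field_simp
      ring
    rw [h1, Real.exp_neg,
      show (8:ℝ) * (Real.exp (3/2))⁻¹ = 8 / Real.exp (3/2) by ring,
      div_le_iff₀ (Real.exp_pos _)]
    nlinarith [exp_three_half_ge]
  have hlog2 : (2/3 : ℝ) < Real.log 2 := log_two_gt_two_thirds
  have hloggn : (2/3 : ℝ) < Real.log n :=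
    lt_of_lt_of_le hlog2 (Real.log_le_log (by norm_num) hn2)
  calc ∫ ω, (⨆ s : T, ⨆ t : T, ⨆ _ : s ≠ t,
        (|∑ i, (f s i - f t i) * g i ω| / dist s t) ^ 2) ∂P
      ≤ a + c * (2 * (n:ℝ) ^ 2) := le_trans hle1 hle2
    _ ≤ 8 * Real.log n + 8 := by rw [ha]; linarith
    _ ≤ 20 * Real.log n := by linarith
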